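/- arXiv:2002.11916 — 8 statements merged into one kernel-verified Lean document; each statement's English description precedes it below -/
import Mathlib

section
/- Let L : ℝ^p → ℝ be convex and differentiable, and define the score s(θ) = -∇L(θ). If θ̂ minimizes θ ↦ L(θ) + r‖θ‖₂² for some r ≥ 0, then θ̂ also minimizes θ ↦ L(θ) + λ‖θ‖₂ with λ = 2r‖θ̂‖₂. -/
open scoped RealInnerProductSpace

/-- Gradient inequality for a convex differentiable function. -/
lemma convex_fderiv_le {E : Type*} [NormedAddCommGroup E] [NormedSpace ℝ E]
    {L : E → ℝ} (hconv : ConvexOn ℝ Set.univ L) (hdiff : Differentiable ℝ L)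
    (x y : E) : fderiv ℝ L x (y - x) ≤ L y - L x := by
  rcases eq_or_ne y x with rfl | hne
  · simp
  set g : ℝ → ℝ := fun t => L (x + t • (y - x)) with hg
  have hcurve : ∀ t : ℝ, HasDerivAt (fun s : ℝ => x + s • (y - x)) (y - x) t := by
    intro t
    simpa using ((hasDerivAt_id t).smul_const (y - x)).const_add x
  have hgd : HasDerivAt g (fderiv ℝ L x (y - x)) 0 := by
    have := ((hdiff (x + (0:ℝ) • (y - x))).hasFDerivAt.comp_hasDerivAt 0 (hcurve 0))
    simp at this; rw [map_sub]; exact this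
  have hgconv : ConvexOn ℝ Set.univ g := by
    have haff : ConvexOn ℝ ((AffineMap.lineMap x y : ℝ →ᵃ[ℝ] E) ⁻¹' Set.univ)
        (L ∘ (AffineMap.lineMap x y : ℝ →ᵃ[ℝ] E)) :=
      hconv.comp_affineMap _
    have : ((AffineMap.lineMap x y : ℝ →ᵃ[ℝ] E) ⁻¹' Set.univ) = Set.univ := by simp
    rw [this] at haff
    convert haff using 1
    funext t
    simp [g, AffineMap.lineMap_apply, add_comm]
  have hslope := hgconv.le_slope_of_hasDerivAt (Set.mem_univ (0:ℝ)) (Set.mem_univ (1:ℝ))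
    one_pos hgd
  have : slope g 0 1 = L y - L x := by
    simp [slope, g]
  linarith [hslope.trans_eq this]

theorem ridge_implies_edr
    (p : ℕ) (L : EuclideanSpace ℝ (Fin p) → ℝ)
    (hconv : ConvexOn ℝ Set.univ L) (hdiff : Differentiable ℝ L)
    (r : ℝ) (hr : 0 ≤ r) (θhat : EuclideanSpace ℝ (Fin p))
    (hmin : ∀ θ, L θhat + r * ‖θhat‖ ^ 2 ≤ L θ + r * ‖θ‖ ^ 2) :
    ∀ θ, L θhat + (2 * r * ‖θhat‖) * ‖θhat‖ ≤ L θ + (2 * r * ‖θhat‖) * ‖θ‖ := by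
  intro θ
  -- the objective function
  set f : EuclideanSpace ℝ (Fin p) → ℝ := fun θ => L θ + r * ‖θ‖ ^ 2 with hf
  have hloc : IsLocalMin f θhat := by
    apply IsMinOn.isLocalMin (s := Set.univ)
    · intro z _; exact hmin z
    · exact Filter.univ_mem
  have hfd : HasFDerivAt f (fderiv ℝ L θhat + r • (2 • (innerSL ℝ θhat))) θhat := by
    have h1 : HasFDerivAt L (fderiv ℝ L θhat) θhat := (hdiff θhat).hasFDerivAt
    have h2 : HasFDerivAt (fun x : EuclideanSpace ℝ (Fin p) => ‖x‖ ^ 2)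
        (2 • (innerSL ℝ θhat)) θhat := (hasStrictFDerivAt_norm_sq θhat).hasFDerivAt
    have := h1.add (h2.const_smul r)
    exact this
  have hzero : (fderiv ℝ L θhat + r • (2 • (innerSL ℝ θhat))) = 0 :=
    hloc.hasFDerivAt_eq_zero hfd
  have hgrad : ∀ v, fderiv ℝ L θhat v = - (2 * r * ⟪θhat, v⟫) := by
    intro v
    have := congrFun (congrArg DFunLike.coe hzero) v
    simp only [ContinuousLinearMap.add_apply, ContinuousLinearMap.smul_apply,
      ContinuousLinearMap.zero_apply, innerSL_apply_apply, smul_eq_mul, two_smul,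
      ContinuousLinearMap.coe_smul', Pi.smul_apply] at this
    linarith
  have hkey := convex_fderiv_le hconv hdiff θhat θ
  rw [map_sub, hgrad θ, hgrad θhat] at hkey
  have hself : ⟪θhat, θhat⟫ = ‖θhat‖ ^ 2 := real_inner_self_eq_norm_sq θhat
  have hcs : ⟪θhat, θ⟫ ≤ ‖θhat‖ * ‖θ‖ := real_inner_le_norm θhat θ
  nlinarith [norm_nonneg θhat, norm_nonneg θ]
end

section
/- Let L : ℝ^p → ℝ be convex and differentiable. If θ̂ ≠ 0 minimizes θ ↦ L(θ) + λ‖θ‖₂ for some λ ≥ 0, then θ̂ also minimizes θ ↦ L(θ) + r‖θ‖₂² with r = λ/(2‖θ̂‖₂). -/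
theorem edr_implies_ridge
    (p : ℕ) (L : EuclideanSpace ℝ (Fin p) → ℝ)
    (hconv : ConvexOn ℝ Set.univ L) (hdiff : Differentiable ℝ L)
    (lam : ℝ) (hlam : 0 ≤ lam) (θhat : EuclideanSpace ℝ (Fin p)) (hne : θhat ≠ 0)
    (hmin : ∀ θ, L θhat + lam * ‖θhat‖ ≤ L θ + lam * ‖θ‖) :
    ∀ θ, L θhat + (lam / (2 * ‖θhat‖)) * ‖θhat‖ ^ 2
      ≤ L θ + (lam / (2 * ‖θhat‖)) * ‖θ‖ ^ 2 := by
  intro θ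
  have ha : 0 < ‖θhat‖ := norm_pos_iff.mpr hne
  have hr : lam / (2 * ‖θhat‖) * (2 * ‖θhat‖) = lam :=
    div_mul_cancel₀ _ (by positivity)
  have hrn : 0 ≤ lam / (2 * ‖θhat‖) := by positivity
  have key : 0 ≤ lam / (2 * ‖θhat‖) * (‖θ‖ - ‖θhat‖) ^ 2 :=
    mul_nonneg hrn (sq_nonneg _)
  nlinarith [hmin θ, key, hr]
end

section
/- Let L : ℝ^p → ℝ be convex and differentiable with score s(θ) = -∇L(θ), and suppose θ̂ minimizes the t-ridge objective θ ↦ L(θ)/‖s(θ)‖₂ + ‖θ‖₂ over the set where s(θ) ≠ 0. Set λ := ‖s(θ̂)‖₂. If θ̃ minimizes θ ↦ L(θ) + λ‖θ‖₂ and ‖s(θ̃)‖₂ = λ, then L(θ̂) + λ‖θ̂‖₂ = L(θ̃) + λ‖θ̃‖₂; in particular, if the edr objective L(θ) + λ‖θ‖₂ has a unique minimizer, then θ̂ = θ̃. -/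
theorem tridge_on_edr_path
    (p : ℕ) (L : EuclideanSpace ℝ (Fin p) → ℝ)
    (hconv : ConvexOn ℝ Set.univ L) (hdiff : Differentiable ℝ L)
    (s : EuclideanSpace ℝ (Fin p) → EuclideanSpace ℝ (Fin p))
    (hs : ∀ θ, s θ = -(gradient L θ))
    (θhat : EuclideanSpace ℝ (Fin p)) (hshat : s θhat ≠ 0)
    (hmin : ∀ θ, s θ ≠ 0 → L θhat / ‖s θhat‖ + ‖θhat‖ ≤ L θ / ‖s θ‖ + ‖θ‖)
    (lam : ℝ) (hlamdef : lam = ‖s θhat‖)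
    (θtil : EuclideanSpace ℝ (Fin p))
    (hedr : ∀ θ, L θtil + lam * ‖θtil‖ ≤ L θ + lam * ‖θ‖)
    (hstil : ‖s θtil‖ = lam) :
    L θhat + lam * ‖θhat‖ = L θtil + lam * ‖θtil‖ ∧
      ((∀ a b : EuclideanSpace ℝ (Fin p),
          (∀ θ, L a + lam * ‖a‖ ≤ L θ + lam * ‖θ‖) →
          (∀ θ, L b + lam * ‖b‖ ≤ L θ + lam * ‖θ‖) → a = b) → θhat = θtil) := by
  have hlampos : 0 < lam := by
    rw [hlamdef]; exact norm_pos_iff.mpr hshat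
  have hstilne : s θtil ≠ 0 := by
    intro h
    rw [h, norm_zero] at hstil
    exact hlampos.ne hstil
  have h1 := hmin θtil hstilne
  rw [← hlamdef, hstil] at h1
  have h2 : L θhat + lam * ‖θhat‖ ≤ L θtil + lam * ‖θtil‖ := by
    have := mul_le_mul_of_nonneg_left h1 hlampos.le
    calc L θhat + lam * ‖θhat‖ = lam * (L θhat / lam + ‖θhat‖) := by
          field_simp
      _ ≤ lam * (L θtil / lam + ‖θtil‖) := this
      _ = L θtil + lam * ‖θtil‖ := by field_simp
  have heq : L θhat + lam * ‖θhat‖ = L θtil + lam * ‖θtil‖ :=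
    le_antisymm h2 (hedr θhat)
  refine ⟨heq, fun huniq => ?_⟩
  exact huniq θhat θtil (fun θ => heq ▸ hedr θ) hedr
end

section
/- Let L : ℝ^p → ℝ satisfy L(θ) > 0 for all θ, and let f(θ) = L(θ)/‖s(θ)‖₂ + ‖θ‖₂ be the t-ridge objective. Suppose θ' and θ'' are both global minimizers of f with λ' := ‖s(θ')‖₂ > 0 and λ'' := ‖s(θ'')‖₂ > 0, and suppose θ' minimizes θ ↦ L(θ) + λ'‖θ‖₂ and θ'' minimizes θ ↦ L(θ) + λ''‖θ‖₂. Then λ' = λ''. -/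
theorem tridge_tuning_unique
    (p : ℕ) (L : EuclideanSpace ℝ (Fin p) → ℝ)
    (hdiff : Differentiable ℝ L)
    (hLpos : ∀ θ, 0 < L θ)
    (s : EuclideanSpace ℝ (Fin p) → EuclideanSpace ℝ (Fin p))
    (hs : ∀ θ, s θ = -(gradient L θ))
    (θ' θ'' : EuclideanSpace ℝ (Fin p))
    (lam' lam'' : ℝ)
    (hlam' : lam' = ‖s θ'‖) (hlam'' : lam'' = ‖s θ''‖)
    (hlam'pos : 0 < lam') (hlam''pos : 0 < lam'')
    (hmin' : ∀ θ, s θ ≠ 0 → L θ' / ‖s θ'‖ + ‖θ'‖ ≤ L θ / ‖s θ‖ + ‖θ‖)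
    (hmin'' : ∀ θ, s θ ≠ 0 → L θ'' / ‖s θ''‖ + ‖θ''‖ ≤ L θ / ‖s θ‖ + ‖θ‖)
    (hedr' : ∀ θ, L θ' + lam' * ‖θ'‖ ≤ L θ + lam' * ‖θ‖)
    (hedr'' : ∀ θ, L θ'' + lam'' * ‖θ''‖ ≤ L θ + lam'' * ‖θ‖) :
    lam' = lam'' := by
  have hs'ne : s θ' ≠ 0 := fun h => by simp [h] at hlam'; linarith
  have hs''ne : s θ'' ≠ 0 := fun h => by simp [h] at hlam''; linarith
  have h1 := hmin' θ'' hs''ne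
  have h2 := hmin'' θ' hs'ne
  rw [← hlam', ← hlam''] at h1 h2
  have hE : L θ' / lam' + ‖θ'‖ = L θ'' / lam'' + ‖θ''‖ := le_antisymm h1 h2
  have he1 := hedr' θ''
  have he2 := hedr'' θ'
  have ha := hLpos θ'
  have hb := hLpos θ''
  have hE' : L θ' * lam'' + ‖θ'‖ * (lam' * lam'') = L θ'' * lam' + ‖θ''‖ * (lam' * lam'') := by
    field_simp at hE
    linarith
  nlinarith [mul_le_mul_of_nonneg_right he1 hlam''pos.le,
    mul_le_mul_of_nonneg_right he2 hlam'pos.le,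
    mul_pos ha hb, mul_pos hlam'pos hlam''pos]
end

section
/- In a generalized linear model with data (y, X) ∈ ℝⁿ × ℝ^{n×p}, let β̂ minimize β ↦ -∑ᵢ(yᵢ xᵢᵀβ - b(xᵢᵀβ)) + λ‖β‖₂ where b : ℝ → ℝ. Suppose the margin condition holds with constant C > 0: for each i, b(xᵢᵀβ̂) - b(xᵢᵀβ*) ≥ b'(xᵢᵀβ*)(xᵢᵀβ̂ - xᵢᵀβ*) + (1/C²)(xᵢᵀβ̂ - xᵢᵀβ*)². Write yᵢ = b'(xᵢᵀβ*) + εᵢ, and suppose λ ≥ ‖Xᵀε‖₂. Then ‖X(β̂ - β*)‖₂² ≤ 2C²λ‖β*‖₂. -/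
open scoped RealInnerProductSpace

theorem edr_glm_prediction_bound
    (n p : ℕ) (y : Fin n → ℝ) (X : Fin n → EuclideanSpace ℝ (Fin p))
    (b : ℝ → ℝ) (hb : Differentiable ℝ b)
    (βstar βhat : EuclideanSpace ℝ (Fin p))
    (lam C : ℝ) (hC : 0 < C)
    (ε : Fin n → ℝ)
    (hε : ∀ i, ε i = y i - deriv b ⟪X i, βstar⟫)
    (hmargin : ∀ i, b ⟪X i, βhat⟫ - b ⟪X i, βstar⟫ ≥
      deriv b ⟪X i, βstar⟫ * (⟪X i, βhat⟫ - ⟪X i, βstar⟫)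
        + (1 / C ^ 2) * (⟪X i, βhat⟫ - ⟪X i, βstar⟫) ^ 2)
    (hlam : lam ≥ ‖∑ i, ε i • X i‖)
    (hmin : ∀ β : EuclideanSpace ℝ (Fin p),
      -(∑ i, (y i * ⟪X i, βhat⟫ - b ⟪X i, βhat⟫)) + lam * ‖βhat‖
        ≤ -(∑ i, (y i * ⟪X i, β⟫ - b ⟪X i, β⟫)) + lam * ‖β‖) :
    ∑ i, (⟪X i, βhat⟫ - ⟪X i, βstar⟫) ^ 2 ≤ 2 * C ^ 2 * lam * ‖βstar‖ := by
  have key := hmin βstar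
  -- pointwise bound combining margin and noise decomposition
  have hpt : ∀ i, y i * ⟪X i, βhat⟫ - b ⟪X i, βhat⟫
      - (y i * ⟪X i, βstar⟫ - b ⟪X i, βstar⟫)
      ≤ ε i * (⟪X i, βhat⟫ - ⟪X i, βstar⟫)
        - (1 / C ^ 2) * (⟪X i, βhat⟫ - ⟪X i, βstar⟫) ^ 2 := by
    intro i
    have h1 := hmargin i
    have hy : y i = deriv b ⟪X i, βstar⟫ + ε i := by linarith [hε i]
    rw [hy]; nlinarith [h1]
  have hS : ∑ i, (y i * ⟪X i, βhat⟫ - b ⟪X i, βhat⟫)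
      - ∑ i, (y i * ⟪X i, βstar⟫ - b ⟪X i, βstar⟫)
      ≤ ∑ i, ε i * (⟪X i, βhat⟫ - ⟪X i, βstar⟫)
        - (1 / C ^ 2) * ∑ i, (⟪X i, βhat⟫ - ⟪X i, βstar⟫) ^ 2 := by
    rw [← Finset.sum_sub_distrib, Finset.mul_sum, ← Finset.sum_sub_distrib]
    exact Finset.sum_le_sum fun i _ => hpt i
  -- inner product identity
  have hip : ⟪∑ i, ε i • X i, βhat - βstar⟫
      = ∑ i, ε i * (⟪X i, βhat⟫ - ⟪X i, βstar⟫) := by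
    rw [sum_inner]
    refine Finset.sum_congr rfl fun i _ => ?_
    rw [real_inner_smul_left, inner_sub_right]
  have hcs : ∑ i, ε i * (⟪X i, βhat⟫ - ⟪X i, βstar⟫) ≤ lam * (‖βhat‖ + ‖βstar‖) := by
    rw [← hip]
    calc ⟪∑ i, ε i • X i, βhat - βstar⟫ ≤ ‖∑ i, ε i • X i‖ * ‖βhat - βstar‖ :=
          real_inner_le_norm _ _
      _ ≤ lam * (‖βhat‖ + ‖βstar‖) := by
          exact mul_le_mul hlam (norm_sub_le _ _) (norm_nonneg _)
            (le_trans (norm_nonneg _) hlam)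
  have hlam0 : 0 ≤ lam := le_trans (norm_nonneg _) hlam
  have hB0 : 0 ≤ ‖βhat‖ := norm_nonneg _
  have hC2 : (0:ℝ) < C ^ 2 := by positivity
  set S := ∑ i, (⟪X i, βhat⟫ - ⟪X i, βstar⟫) ^ 2 with hSdef
  have h6 : (1 / C ^ 2) * S ≤ 2 * lam * ‖βstar‖ := by linarith
  have h7 := mul_le_mul_of_nonneg_left h6 hC2.le
  have h8 : C ^ 2 * ((1 / C ^ 2) * S) = S := by field_simp
  linarith [h7, h8]
end

section
/- Let L : ℝ^p → ℝ be given, s(·) a function with ‖s(θ)‖₂ > 0 at the relevant points, and suppose β̂ minimizes θ ↦ L(θ)/‖s(θ)‖₂ + ‖θ‖₂ with λ̂ := ‖s(β̂)‖₂. Let β_λ* minimize θ ↦ L(θ) + λ*‖θ‖₂ for some λ* > 0, and suppose ‖s(β_λ*)‖₂ = λ* (score identity on the edr path). If L(β̂) > 0 then λ̂ ≥ λ*, and if L(β̂) < 0 then λ̂ ≤ λ*. -/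
theorem tridge_tuning_comparison
    (p : ℕ) (L : EuclideanSpace ℝ (Fin p) → ℝ)
    (s : EuclideanSpace ℝ (Fin p) → EuclideanSpace ℝ (Fin p))
    (βhat βlam : EuclideanSpace ℝ (Fin p))
    (hsβhat : ‖s βhat‖ > 0) (hsβlam : ‖s βlam‖ > 0)
    (hmin : ∀ θ, s θ ≠ 0 → L βhat / ‖s βhat‖ + ‖βhat‖ ≤ L θ / ‖s θ‖ + ‖θ‖)
    (lamhat lamstar : ℝ) (hlamhat : lamhat = ‖s βhat‖) (hlamstar : 0 < lamstar)
    (hedr : ∀ θ, L βlam + lamstar * ‖βlam‖ ≤ L θ + lamstar * ‖θ‖)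
    (hscore : ‖s βlam‖ = lamstar) :
    (0 < L βhat → lamhat ≥ lamstar) ∧ (L βhat < 0 → lamhat ≤ lamstar) := by
  have hne : s βlam ≠ 0 := by
    intro h; rw [h] at hsβlam; simp at hsβlam
  have h1 := hmin βlam hne
  rw [hscore] at h1
  have h2 : L βlam / lamstar + ‖βlam‖ ≤ L βhat / lamstar + ‖βhat‖ := by
    have := hedr βhat
    rw [div_add' _ _ _ hlamstar.ne', div_add' _ _ _ hlamstar.ne',
      div_le_div_iff₀ hlamstar hlamstar]
    nlinarith
  have hkey : L βhat / lamhat ≤ L βhat / lamstar := by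
    rw [hlamhat]; linarith
  have hpos : 0 < lamhat := hlamhat ▸ hsβhat
  constructor
  · intro hL
    rw [div_le_div_iff₀ hpos hlamstar] at hkey
    nlinarith
  · intro hL
    rw [div_le_div_iff₀ hpos hlamstar] at hkey
    nlinarith
end

section
/- In linear regression, if β̂ minimizes β ↦ ‖y - Xβ‖₂² + λ‖β‖₂ with λ ≥ 2‖Xᵀε‖₂ where ε = y - Xβ*, then ‖X(β̂ - β*)‖₂² ≤ λ‖β*‖₂. -/
open scoped RealInnerProductSpace

theorem linreg_edr_prediction_bound
    (n p : ℕ) (y : Fin n → ℝ) (X : Fin n → EuclideanSpace ℝ (Fin p))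
    (βstar βhat : EuclideanSpace ℝ (Fin p)) (lam : ℝ)
    (ε : Fin n → ℝ) (hε : ∀ i, ε i = y i - ⟪X i, βstar⟫)
    (hlam : lam ≥ 2 * ‖∑ i, ε i • X i‖)
    (hmin : ∀ β : EuclideanSpace ℝ (Fin p),
      (∑ i, (y i - ⟪X i, βhat⟫) ^ 2) + lam * ‖βhat‖
        ≤ (∑ i, (y i - ⟪X i, β⟫) ^ 2) + lam * ‖β‖) :
    ∑ i, (⟪X i, βhat⟫ - ⟪X i, βstar⟫) ^ 2 ≤ lam * ‖βstar‖ := by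
  set d : Fin n → ℝ := fun i => ⟪X i, βhat⟫ - ⟪X i, βstar⟫ with hd
  set r : Fin n → ℝ := fun i => y i - ⟪X i, βhat⟫ with hr
  set S : ℝ := ∑ i, d i ^ 2 with hS
  have hS0 : 0 ≤ S := Finset.sum_nonneg fun i _ => sq_nonneg _
  have hlam0 : 0 ≤ lam := le_trans (by positivity) hlam
  -- key inequality for t ∈ (0,1]
  have key : ∀ t : ℝ, 0 < t → t ≤ 1 →
      -2 * ∑ i, r i * d i ≤ t * S + lam * (‖βstar‖ - ‖βhat‖) := by
    intro t ht ht1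
    have h := hmin (βhat + t • (βstar - βhat))
    have hinner : ∀ i, ⟪X i, βhat + t • (βstar - βhat)⟫ = ⟪X i, βhat⟫ - t * d i := by
      intro i
      rw [inner_add_right, inner_smul_right, inner_sub_right]
      simp only [hd]; ring
    have hnorm : ‖βhat + t • (βstar - βhat)‖ ≤ (1 - t) * ‖βhat‖ + t * ‖βstar‖ := by
      have heq : βhat + t • (βstar - βhat) = (1 - t) • βhat + t • βstar := by
        module
      rw [heq]
      calc ‖(1-t) • βhat + t • βstar‖ ≤ ‖(1-t) • βhat‖ + ‖t • βstar‖ := norm_add_le _ _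
        _ = (1-t) * ‖βhat‖ + t * ‖βstar‖ := by
            rw [norm_smul, norm_smul, Real.norm_eq_abs, Real.norm_eq_abs,
              abs_of_nonneg (by linarith), abs_of_nonneg ht.le]
    have hquad : ∑ i, (y i - ⟪X i, βhat + t • (βstar - βhat)⟫) ^ 2
        = (∑ i, r i ^ 2) + 2 * t * (∑ i, r i * d i) + t ^ 2 * S := by
      rw [hS, Finset.mul_sum, Finset.mul_sum, ← Finset.sum_add_distrib,
        ← Finset.sum_add_distrib]
      apply Finset.sum_congr rfl
      intro i _
      rw [hinner i]
      simp only [hr]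
      ring
    rw [hquad] at h
    have h2 : lam * ‖βhat + t • (βstar - βhat)‖ ≤ lam * ((1-t)*‖βhat‖ + t*‖βstar‖) :=
      mul_le_mul_of_nonneg_left hnorm hlam0
    have h3 : lam * ‖βhat‖ ≤ (∑ i, r i ^ 2) - (∑ i, r i ^ 2)
        + 2 * t * (∑ i, r i * d i) + t ^ 2 * S + lam * ((1-t)*‖βhat‖ + t*‖βstar‖) := by
      have hsum : (∑ i, (y i - ⟪X i, βhat⟫) ^ 2) = ∑ i, r i ^ 2 := by
        simp only [hr]
      nlinarith [h, h2, hsum]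
    have h4 : 0 ≤ 2 * t * (∑ i, r i * d i) + t ^ 2 * S
        + lam * t * (‖βstar‖ - ‖βhat‖) := by nlinarith [h3]
    have h5 : t * (-2 * ∑ i, r i * d i) ≤ t * (t * S + lam * (‖βstar‖ - ‖βhat‖)) := by
      nlinarith [h4]
    exact le_of_mul_le_mul_left h5 ht
  -- take t → 0
  have key2 : -2 * ∑ i, r i * d i ≤ lam * (‖βstar‖ - ‖βhat‖) := by
    apply le_of_forall_pos_le_add
    intro η hη
    have ht : 0 < min 1 (η / (S + 1)) := lt_min one_pos (by positivity)
    have hk := key _ ht (min_le_left _ _)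
    have h1 : min 1 (η / (S+1)) * S ≤ η := by
      calc min 1 (η / (S+1)) * S ≤ (η / (S+1)) * S :=
            mul_le_mul_of_nonneg_right (min_le_right _ _) hS0
        _ ≤ (η / (S+1)) * (S+1) :=
            mul_le_mul_of_nonneg_left (by linarith) (by positivity)
        _ = η := div_mul_cancel₀ _ (by positivity)
    linarith
  -- bound cross term via Cauchy–Schwarz
  have hE : ∑ i, ε i * d i ≤ (lam / 2) * ‖βhat - βstar‖ := by
    have heq : ∑ i, ε i * d i = ⟪∑ i, ε i • X i, βhat - βstar⟫ := by
      rw [sum_inner]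
      apply Finset.sum_congr rfl
      intro i _
      rw [real_inner_smul_left, inner_sub_right]
    rw [heq]
    calc ⟪∑ i, ε i • X i, βhat - βstar⟫ ≤ ‖∑ i, ε i • X i‖ * ‖βhat - βstar‖ :=
          real_inner_le_norm _ _
      _ ≤ (lam / 2) * ‖βhat - βstar‖ :=
          mul_le_mul_of_nonneg_right (by linarith) (norm_nonneg _)
  have htri : ‖βhat - βstar‖ ≤ ‖βhat‖ + ‖βstar‖ := norm_sub_le _ _
  have hrd : ∑ i, r i * d i = (∑ i, ε i * d i) - S := by
    rw [hS, ← Finset.sum_sub_distrib]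
    apply Finset.sum_congr rfl
    intro i _
    have hri : r i = ε i - d i := by
      simp only [hr, hd, hε i]; ring
    rw [hri]; ring
  have hδ : lam * ‖βhat - βstar‖ ≤ lam * (‖βhat‖ + ‖βstar‖) :=
    mul_le_mul_of_nonneg_left htri hlam0
  show S ≤ lam * ‖βstar‖
  nlinarith [key2, hE, hrd, hδ]
end

section
/- Let L : ℝ^p → ℝ, λ', λ'' > 0, and suppose θ' minimizes θ ↦ L(θ) + λ'‖θ‖₂ and θ'' minimizes θ ↦ L(θ) + λ''‖θ‖₂, and that L(θ')/λ' + ‖θ'‖₂ = L(θ'')/λ'' + ‖θ''‖₂ (equal t-ridge objective values with ‖s(θ')‖₂ = λ', ‖s(θ'')‖₂ = λ''). Then L(θ')/λ' ≤ L(θ')/λ'' and L(θ'')/λ'' ≤ L(θ'')/λ'. -/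
theorem tridge_uniqueness_inequalities
    (p : ℕ) (L : EuclideanSpace ℝ (Fin p) → ℝ)
    (lam' lam'' : ℝ) (hlam' : 0 < lam') (hlam'' : 0 < lam'')
    (θ' θ'' : EuclideanSpace ℝ (Fin p))
    (hedr' : ∀ θ, L θ' + lam' * ‖θ'‖ ≤ L θ + lam' * ‖θ‖)
    (hedr'' : ∀ θ, L θ'' + lam'' * ‖θ''‖ ≤ L θ + lam'' * ‖θ‖)
    (heq : L θ' / lam' + ‖θ'‖ = L θ'' / lam'' + ‖θ''‖) :
    L θ' / lam' ≤ L θ' / lam'' ∧ L θ'' / lam'' ≤ L θ'' / lam' := by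
  have h1 := hedr'' θ'
  have h2 := hedr' θ''
  have e1 : L θ'' / lam'' + ‖θ''‖ ≤ L θ' / lam'' + ‖θ'‖ := by
    rw [div_add' _ _ _ hlam''.ne', div_add' _ _ _ hlam''.ne',
      div_le_div_iff₀ hlam'' hlam'']
    nlinarith [h1, hlam''.le]
  have e2 : L θ' / lam' + ‖θ'‖ ≤ L θ'' / lam' + ‖θ''‖ := by
    rw [div_add' _ _ _ hlam'.ne', div_add' _ _ _ hlam'.ne',
      div_le_div_iff₀ hlam' hlam']
    nlinarith [h2, hlam'.le]
  constructor
  · linarith [heq ▸ e1]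
  · linarith [heq ▸ e2]
end
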